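/- arXiv:1804.06444 — 4 statements merged into one kernel-verified Lean document; each statement's English description precedes it below -/
import Mathlib

section
/- At every point x = (x₁,…,x_{2n},t) ∈ ℝ^{2n+1} with Σ(x) ≠ 0, the squared norm of the horizontal gradient of f = h^w satisfies ‖∇₀f‖² = α² c² h^{2w−1} Σ^{2k−1}. -/
open MeasureTheory Real Filter

noncomputable section

/-- Points of `ℝ^{2n+1}`: the `2n` horizontal coordinates indexed by `Fin n ⊕ Fin n`
(`Sum.inl i` encodes the coordinate `x_i` for `1 ≤ i ≤ n`, and `Sum.inr i` encodes the
coordinate `x_{i+n}`), together with the vertical coordinate `t`. -/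
abbrev Pt (n : ℕ) := ((Fin n ⊕ Fin n) → ℝ) × ℝ

/-- `Σ(x) = ∑_{l=1}^{2n} (x_l - a_l)²`. -/
def Sg (n : ℕ) (a : Fin n ⊕ Fin n → ℝ) (x : Pt n) : ℝ :=
  ∑ l : Fin n ⊕ Fin n, (x.1 l - a l) ^ 2

/-- Partial derivative `∂u/∂x_l` in the `l`-th horizontal coordinate direction. -/
def pdx (n : ℕ) (l : Fin n ⊕ Fin n) (u : Pt n → ℝ) (x : Pt n) : ℝ :=
  fderiv ℝ u x (Pi.single l 1, 0)

/-- Partial derivative `∂u/∂t` in the vertical direction. -/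
def pdt (n : ℕ) (u : Pt n → ℝ) (x : Pt n) : ℝ :=
  fderiv ℝ u x (0, 1)

/-- The Hörmander vector fields:
`X_i u = ∂u/∂x_i + 2kc (x_{i+n} - a_{i+n}) Σ^{k-1} ∂u/∂t` for `1 ≤ i ≤ n`, and
`X_j u = ∂u/∂x_j - 2kc (x_{j-n} - a_{j-n}) Σ^{k-1} ∂u/∂t` for `n+1 ≤ j ≤ 2n`. -/
def X (n : ℕ) (k c : ℝ) (a : Fin n ⊕ Fin n → ℝ) (l : Fin n ⊕ Fin n)
    (u : Pt n → ℝ) (x : Pt n) : ℝ :=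
  match l with
  | Sum.inl i => pdx n (Sum.inl i) u x
      + 2 * k * c * (x.1 (Sum.inr i) - a (Sum.inr i)) * Sg n a x ^ (k - 1) * pdt n u x
  | Sum.inr j => pdx n (Sum.inr j) u x
      - 2 * k * c * (x.1 (Sum.inl j) - a (Sum.inl j)) * Sg n a x ^ (k - 1) * pdt n u x

/-- Norm of the horizontal gradient `∇₀u = (X₁u, …, X_{2n}u)`. -/
def hnorm (n : ℕ) (k c : ℝ) (a : Fin n ⊕ Fin n → ℝ) (u : Pt n → ℝ) (x : Pt n) : ℝ :=
  Real.sqrt (∑ l : Fin n ⊕ Fin n, (X n k c a l u x) ^ 2)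

/-- The `p`-Laplacian `Δ_p u = ∑_{l=1}^{2n} X_l (‖∇₀u‖^{p-2} X_l u)`. -/
def pLap (n : ℕ) (k c : ℝ) (a : Fin n ⊕ Fin n → ℝ) (p : ℝ) (u : Pt n → ℝ) (x : Pt n) : ℝ :=
  ∑ l : Fin n ⊕ Fin n,
    X n k c a l (fun y => hnorm n k c a u y ^ (p - 2) * X n k c a l u y) x

/-- `h(x) = c² Σ(x)^{2k} + (t-s)²`. -/
def hfun (n : ℕ) (k c : ℝ) (a : Fin n ⊕ Fin n → ℝ) (s : ℝ) (x : Pt n) : ℝ :=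
  c ^ 2 * Sg n a x ^ (2 * k) + (x.2 - s) ^ 2

/-- `ψ = h^{1/(4k)}`. -/
def psi (n : ℕ) (k c : ℝ) (a : Fin n ⊕ Fin n → ℝ) (s : ℝ) (x : Pt n) : ℝ :=
  hfun n k c a s x ^ (1 / (4 * k))

theorem stmt1 (n : ℕ) (hn : 1 ≤ n) (a : Fin n ⊕ Fin n → ℝ) (s : ℝ)
    (c k : ℝ) (hc : c ≠ 0) (hk : 0 < k)
    (p Q w α : ℝ) (hp : 1 < p) (hQ : Q = 2 * n + 2 * k) (hpQ : p ≠ Q)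
    (hα : α = (Q - p) / (1 - p)) (hw : w = (Q - p) / ((1 - p) * (4 * k)))
    (x : Pt n) (hx : Sg n a x ≠ 0) :
    ∑ l : Fin n ⊕ Fin n, (X n k c a l (fun y => hfun n k c a s y ^ w) x) ^ 2
      = α ^ 2 * c ^ 2 * hfun n k c a s x ^ (2 * w - 1) * Sg n a x ^ (2 * k - 1) := by
  
  classical
  have hS0 : (0:ℝ) ≤ Sg n a x := Finset.sum_nonneg fun l _ => sq_nonneg _
  have hSpos : 0 < Sg n a x := hS0.lt_of_ne (Ne.symm hx)
  set S := Sg n a x with hSdef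
  set τ := x.2 - s with hτ
  have hhx : hfun n k c a s x = c ^ 2 * S ^ (2*k) + τ ^ 2 := rfl
  have hc2 : (0:ℝ) < c ^ 2 := by positivity
  have hhpos : 0 < hfun n k c a s x := by
    rw [hhx]
    have := Real.rpow_pos_of_pos hSpos (2*k)
    positivity
  set h := hfun n k c a s x with hhdef
  -- the continuous linear maps
  set φ : (Fin n ⊕ Fin n) → Pt n →L[ℝ] ℝ := fun l =>
    (ContinuousLinearMap.proj l).comp (ContinuousLinearMap.fst ℝ ((Fin n ⊕ Fin n) → ℝ) ℝ) with hφ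
  set ψ : Pt n →L[ℝ] ℝ := ContinuousLinearMap.snd ℝ ((Fin n ⊕ Fin n) → ℝ) ℝ with hψ
  have hsub : ∀ l, HasFDerivAt (fun y : Pt n => y.1 l - a l) (φ l) x := fun l =>
    ((φ l).hasFDerivAt).sub_const (a l)
  set D : Pt n →L[ℝ] ℝ := ∑ l : Fin n ⊕ Fin n, ((2:ℝ) * (x.1 l - a l) ^ 1) • φ l with hDdef
  have hD : HasFDerivAt (Sg n a) D x := by
    have : HasFDerivAt (fun y : Pt n => ∑ l : Fin n ⊕ Fin n, (y.1 l - a l) ^ 2) D x := by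
      refine HasFDerivAt.fun_sum fun l _ => ?_
      exact (hasDerivAt_pow 2 (x.1 l - a l)).comp_hasFDerivAt x (hsub l)
    exact this
  set Dh : Pt n →L[ℝ] ℝ :=
    (c ^ 2) • ((2*k * S ^ (2*k-1)) • D) + ((2:ℝ) * (x.2 - s) ^ 1) • ψ with hDhdef
  have hhd : HasFDerivAt (hfun n k c a s) Dh x := by
    have h1 : HasFDerivAt (fun y => c ^ 2 * Sg n a y ^ (2*k))
        ((c ^ 2) • ((2*k * S ^ (2*k-1)) • D)) x :=
      (hD.rpow_const (Or.inl hx)).const_mul (c ^ 2)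
    have h2 : HasFDerivAt (fun y : Pt n => (y.2 - s) ^ 2) (((2:ℝ) * (x.2 - s) ^ 1) • ψ) x :=
      by have := (hasDerivAt_pow 2 (x.2 - s)).comp_hasFDerivAt x ((ψ.hasFDerivAt).sub_const s); exact this
    exact h1.add h2
  have hF : HasFDerivAt (fun y => hfun n k c a s y ^ w) ((w * h ^ (w-1)) • Dh) x :=
    hhd.rpow_const (Or.inl hhpos.ne')
  have hfd : fderiv ℝ (fun y => hfun n k c a s y ^ w) x = (w * h ^ (w-1)) • Dh := hF.fderiv
  -- evaluate the CLMs on basis directions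
  have hDapp : ∀ l, D (Pi.single l 1, (0:ℝ)) = 2 * (x.1 l - a l) := by
    intro l
    rw [hDdef, ContinuousLinearMap.sum_apply]
    rw [Finset.sum_eq_single l]
    · simp [hφ]
    · intro b _ hb
      simp [hφ, Pi.single_eq_of_ne hb]
    · simp
  have hDapp2 : D ((0 : (Fin n ⊕ Fin n) → ℝ), (1:ℝ)) = 0 := by
    rw [hDdef, ContinuousLinearMap.sum_apply]
    apply Finset.sum_eq_zero
    intro b _
    simp [hφ]
  have hDh1 : ∀ l, Dh (Pi.single l 1, (0:ℝ))
      = c ^ 2 * (2*k * S ^ (2*k-1) * (2 * (x.1 l - a l))) := by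
    intro l
    rw [hDhdef]
    simp only [ContinuousLinearMap.add_apply, ContinuousLinearMap.smul_apply, smul_eq_mul,
      hDapp l]
    rw [hψ]
    simp
  have hDh2 : Dh ((0 : (Fin n ⊕ Fin n) → ℝ), (1:ℝ)) = 2 * τ := by
    rw [hDhdef]
    simp only [ContinuousLinearMap.add_apply, ContinuousLinearMap.smul_apply, smul_eq_mul,
      hDapp2]
    rw [hψ]
    simp [hτ]
  -- partial derivatives
  have hP : ∀ l, pdx n l (fun y => hfun n k c a s y ^ w) x
      = w * h ^ (w-1) * (c ^ 2 * (2*k * S ^ (2*k-1) * (2 * (x.1 l - a l)))) := by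
    intro l
    rw [pdx, hfd, ContinuousLinearMap.smul_apply, hDh1 l, smul_eq_mul]
  have hT : pdt n (fun y => hfun n k c a s y ^ w) x = w * h ^ (w-1) * (2 * τ) := by
    rw [pdt, hfd]
    show ((w * h ^ (w-1)) • Dh) ((0 : (Fin n ⊕ Fin n) → ℝ), (1:ℝ)) = _
    rw [ContinuousLinearMap.smul_apply, hDh2, smul_eq_mul]
  -- values of the vector fields
  have hX1 : ∀ i : Fin n, X n k c a (Sum.inl i) (fun y => hfun n k c a s y ^ w) x
      = 4*k*c*w*h^(w-1) * (c * S^(2*k-1) * (x.1 (Sum.inl i) - a (Sum.inl i))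
          + S^(k-1) * (x.1 (Sum.inr i) - a (Sum.inr i)) * τ) := by
    intro i
    show pdx n (Sum.inl i) _ x + 2*k*c*(x.1 (Sum.inr i) - a (Sum.inr i)) * S^(k-1) * pdt n _ x = _
    rw [hP, hT]; ring
  have hX2 : ∀ i : Fin n, X n k c a (Sum.inr i) (fun y => hfun n k c a s y ^ w) x
      = 4*k*c*w*h^(w-1) * (c * S^(2*k-1) * (x.1 (Sum.inr i) - a (Sum.inr i))
          - S^(k-1) * (x.1 (Sum.inl i) - a (Sum.inl i)) * τ) := by
    intro i
    show pdx n (Sum.inr i) _ x - 2*k*c*(x.1 (Sum.inl i) - a (Sum.inl i)) * S^(k-1) * pdt n _ x = _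
    rw [hP, hT]; ring
  -- sum the squares
  set C : ℝ := (4*k*c*w*h^(w-1))^2 * (c^2 * (S^(2*k-1))^2 + (S^(k-1))^2 * τ^2) with hC
  have hsum : ∑ l : Fin n ⊕ Fin n, (X n k c a l (fun y => hfun n k c a s y ^ w) x) ^ 2
      = C * S := by
    rw [Fintype.sum_sum_type]
    have : ∀ i : Fin n,
        (X n k c a (Sum.inl i) (fun y => hfun n k c a s y ^ w) x) ^ 2
        + (X n k c a (Sum.inr i) (fun y => hfun n k c a s y ^ w) x) ^ 2
        = C * ((x.1 (Sum.inl i) - a (Sum.inl i))^2 + (x.1 (Sum.inr i) - a (Sum.inr i))^2) := by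
      intro i; rw [hX1, hX2, hC]; ring
    rw [← Finset.sum_add_distrib]
    simp_rw [this]
    rw [← Finset.mul_sum]
    congr 1
    rw [hSdef, Sg, Fintype.sum_sum_type, Finset.sum_add_distrib]
  rw [hsum, hC]
  -- rpow identities
  have hSmul : ∀ r r' : ℝ, S ^ r * S ^ r' = S ^ (r + r') := fun r r' =>
    (Real.rpow_add hSpos r r').symm
  have key : ∀ r : ℝ, S ^ r * S = S ^ (r + 1) := fun r => by
    rw [Real.rpow_add hSpos, Real.rpow_one]
  have keyh : ∀ r : ℝ, h ^ r * h = h ^ (r + 1) := fun r => by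
    rw [Real.rpow_add hhpos, Real.rpow_one]
  have hhmul : ∀ r r' : ℝ, h ^ r * h ^ r' = h ^ (r + r') := fun r r' =>
    (Real.rpow_add hhpos r r').symm
  have h1p : (1:ℝ) - p ≠ 0 := ne_of_lt (by linarith)
  have h4k : (4:ℝ) * k ≠ 0 := by positivity
  have hα4 : α = 4 * k * w := by
    rw [hα, hw]; field_simp
  have e1 : (S^(2*k-1))^2 * S = S^(2*k) * S^(2*k-1) := by
    rw [sq, hSmul, key, hSmul]; congr 1; ring
  have e2 : (S^(k-1))^2 * S = S^(2*k-1) := by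
    rw [sq, hSmul, key]; congr 1; ring
  have e3 : (h^(w-1))^2 * h = h^(2*w-1) := by
    rw [sq, hhmul, keyh]; congr 1; ring
  calc (4*k*c*w*h^(w-1))^2 * (c^2 * (S^(2*k-1))^2 + (S^(k-1))^2 * τ^2) * S
      = (4*k*c*w)^2 * (h^(w-1))^2
          * (c^2 * ((S^(2*k-1))^2 * S) + ((S^(k-1))^2 * S) * τ^2) := by ring
    _ = (4*k*c*w)^2 * (h^(w-1))^2 * (c^2 * (S^(2*k) * S^(2*k-1)) + S^(2*k-1) * τ^2) := by
          rw [e1, e2]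
    _ = (4*k*c*w)^2 * ((h^(w-1))^2 * (c^2 * S^(2*k) + τ^2)) * S^(2*k-1) := by ring
    _ = (4*k*c*w)^2 * h^(2*w-1) * S^(2*k-1) := by rw [← hhx, e3]
    _ = α ^ 2 * c ^ 2 * h ^ (2*w-1) * S ^ (2*k-1) := by rw [hα4]; ring
end
end

section
/- Let 1 < p < ∞ with p ≠ Q. At every point of ℝ^{2n+1} ∖ {x₀} where Σ ≠ 0, the function f = h^w satisfies the p-Laplace equation Δ_p f = Σ_{i=1}^{2n} X_i(‖∇₀f‖^{p−2} X_i f) = 0. -/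
open MeasureTheory Real Filter

noncomputable section

namespace SAux

variable {n : ℕ}

abbrev el (n : ℕ) (l : Fin n ⊕ Fin n) : Pt n := (Pi.single l 1, (0:ℝ))
abbrev et (n : ℕ) : Pt n := ((0 : (Fin n ⊕ Fin n) → ℝ), (1:ℝ))

def D1 (n : ℕ) (l : Fin n ⊕ Fin n) : Pt n →L[ℝ] ℝ :=
  (ContinuousLinearMap.proj l).comp (ContinuousLinearMap.fst ℝ ((Fin n ⊕ Fin n) → ℝ) ℝ)

def Dt (n : ℕ) : Pt n →L[ℝ] ℝ := ContinuousLinearMap.snd ℝ ((Fin n ⊕ Fin n) → ℝ) ℝ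

@[simp] lemma D1_apply (l : Fin n ⊕ Fin n) (v : Pt n) : D1 n l v = v.1 l := rfl
@[simp] lemma Dt_apply (v : Pt n) : Dt n v = v.2 := rfl

@[simp] lemma D1_el (l m : Fin n ⊕ Fin n) : D1 n l (el n m) = if l = m then 1 else 0 := by
  simp [Pi.single_apply]
@[simp] lemma D1_et (l : Fin n ⊕ Fin n) : D1 n l (et n) = 0 := rfl
@[simp] lemma Dt_el (m : Fin n ⊕ Fin n) : Dt n (el n m) = 0 := rfl
@[simp] lemma Dt_et : Dt n (et n) = 1 := rfl

def DS (n : ℕ) (a : Fin n ⊕ Fin n → ℝ) (y : Pt n) : Pt n →L[ℝ] ℝ :=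
  ∑ l : Fin n ⊕ Fin n, (2 * (y.1 l - a l)) • D1 n l

lemma hasFDerivAt_Sg (a : Fin n ⊕ Fin n → ℝ) (y : Pt n) :
    HasFDerivAt (Sg n a) (DS n a y) y := by
  have h : ∀ l : Fin n ⊕ Fin n, HasFDerivAt (fun y : Pt n => (y.1 l - a l) ^ 2)
      ((2 * (y.1 l - a l)) • D1 n l) y := by
    intro l
    have h1 : HasFDerivAt (fun y : Pt n => y.1 l - a l) (D1 n l) y :=
      (D1 n l).hasFDerivAt.sub_const (a l)
    have h2 := h1.mul h1
    have he : (2 * (y.1 l - a l)) • D1 n l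
        = (y.1 l - a l) • D1 n l + (y.1 l - a l) • D1 n l := by
      rw [two_mul, add_smul]
    rw [he]
    simpa [pow_two, Pi.mul_def] using h2
  exact HasFDerivAt.fun_sum (fun l (_ : l ∈ Finset.univ) => h l)

@[simp] lemma DS_el (a : Fin n ⊕ Fin n → ℝ) (y : Pt n) (m : Fin n ⊕ Fin n) :
    DS n a y (el n m) = 2 * (y.1 m - a m) := by
  simp only [DS, ContinuousLinearMap.sum_apply, ContinuousLinearMap.smul_apply, D1_el,
    smul_eq_mul, mul_ite, mul_one, mul_zero, Finset.sum_ite_eq, Finset.sum_ite_eq', Finset.mem_univ, if_true]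

@[simp] lemma DS_et (a : Fin n ⊕ Fin n → ℝ) (y : Pt n) : DS n a y (et n) = 0 := by
  simp only [DS, ContinuousLinearMap.sum_apply, ContinuousLinearMap.smul_apply, D1_et,
    smul_eq_mul, mul_zero, Finset.sum_const_zero]

end SAux
namespace SAux

variable {n : ℕ}

lemma Sg_nonneg (a : Fin n ⊕ Fin n → ℝ) (y : Pt n) : 0 ≤ Sg n a y :=
  Finset.sum_nonneg fun l _ => sq_nonneg _

lemma Sg_pos {a : Fin n ⊕ Fin n → ℝ} {y : Pt n} (h : Sg n a y ≠ 0) : 0 < Sg n a y :=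
  lt_of_le_of_ne (Sg_nonneg a y) (Ne.symm h)

lemma hfun_pos {k c : ℝ} {a : Fin n ⊕ Fin n → ℝ} {s : ℝ} {y : Pt n}
    (hc : c ≠ 0) (hS : 0 < Sg n a y) : 0 < hfun n k c a s y := by
  have h1 : 0 < c ^ 2 * Sg n a y ^ (2 * k) :=
    mul_pos (by positivity) (Real.rpow_pos_of_pos hS _)
  have h2 : 0 ≤ (y.2 - s) ^ 2 := sq_nonneg _
  unfold hfun; linarith

def DH (n : ℕ) (k c : ℝ) (a : Fin n ⊕ Fin n → ℝ) (s : ℝ) (y : Pt n) : Pt n →L[ℝ] ℝ :=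
  (c ^ 2 * (2 * k * Sg n a y ^ (2 * k - 1))) • DS n a y + (2 * (y.2 - s)) • Dt n

lemma hasFDerivAt_hfun {k c : ℝ} (a : Fin n ⊕ Fin n → ℝ) (s : ℝ) {y : Pt n}
    (hS : 0 < Sg n a y) : HasFDerivAt (hfun n k c a s) (DH n k c a s y) y := by
  have h1 := ((hasFDerivAt_Sg a y).rpow_const (p := 2 * k) (Or.inl hS.ne')).const_mul (c ^ 2)
  have ht : HasFDerivAt (fun y : Pt n => y.2 - s) (Dt n) y :=
    (Dt n).hasFDerivAt.sub_const s
  have h2 := ht.mul ht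
  have he : (2 * (y.2 - s)) • Dt n = (y.2 - s) • Dt n + (y.2 - s) • Dt n := by
    rw [two_mul, add_smul]
  rw [DH, he]
  have h2' : HasFDerivAt (fun y : Pt n => (y.2 - s) ^ 2)
      ((y.2 - s) • Dt n + (y.2 - s) • Dt n) y := by simpa [pow_two, Pi.mul_def] using h2
  have := h1.add h2'
  rw [show hfun n k c a s = fun y => c ^ 2 * Sg n a y ^ (2 * k) + (y.2 - s) ^ 2 from rfl]
  simpa [hfun, smul_smul, Pi.add_def] using this

def DF (n : ℕ) (k c : ℝ) (a : Fin n ⊕ Fin n → ℝ) (s w : ℝ) (y : Pt n) : Pt n →L[ℝ] ℝ :=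
  (w * hfun n k c a s y ^ (w - 1)) • DH n k c a s y

lemma hasFDerivAt_f {k c : ℝ} (a : Fin n ⊕ Fin n → ℝ) (s w : ℝ) {y : Pt n}
    (hc : c ≠ 0) (hS : 0 < Sg n a y) :
    HasFDerivAt (fun y => hfun n k c a s y ^ w) (DF n k c a s w y) y :=
  (hasFDerivAt_hfun a s hS).rpow_const (Or.inl (hfun_pos hc hS).ne')

@[simp] lemma DH_el {k c : ℝ} (a : Fin n ⊕ Fin n → ℝ) (s : ℝ) (y : Pt n) (m : Fin n ⊕ Fin n) :
    DH n k c a s y (el n m) = c ^ 2 * (2 * k * Sg n a y ^ (2 * k - 1)) * (2 * (y.1 m - a m)) := by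
  simp [DH]

@[simp] lemma DH_et {k c : ℝ} (a : Fin n ⊕ Fin n → ℝ) (s : ℝ) (y : Pt n) :
    DH n k c a s y (et n) = 2 * (y.2 - s) := by
  simp [DH]

end SAux
namespace SAux

variable {n : ℕ}

def ee : Fin n ⊕ Fin n → ℝ := Sum.elim (fun _ => 1) (fun _ => -1)
def sw {n : ℕ} : Fin n ⊕ Fin n → Fin n ⊕ Fin n := Sum.elim Sum.inr Sum.inl

lemma X_eq (k c : ℝ) (a : Fin n ⊕ Fin n → ℝ) (l : Fin n ⊕ Fin n) (u : Pt n → ℝ) (x : Pt n) :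
    X n k c a l u x = pdx n l u x
      + ee l * (2 * k * c * (x.1 (sw l) - a (sw l)) * Sg n a x ^ (k - 1)) * pdt n u x := by
  cases l <;> simp only [X, ee, sw, Sum.elim_inl, Sum.elim_inr] <;> ring

lemma fderiv_f {k c : ℝ} (a : Fin n ⊕ Fin n → ℝ) (s w : ℝ) {y : Pt n}
    (hc : c ≠ 0) (hS : 0 < Sg n a y) :
    fderiv ℝ (fun y => hfun n k c a s y ^ w) y = DF n k c a s w y :=
  (hasFDerivAt_f a s w hc hS).fderiv

lemma Xf {k c : ℝ} (a : Fin n ⊕ Fin n → ℝ) (s w : ℝ) {y : Pt n}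
    (hc : c ≠ 0) (hS : 0 < Sg n a y) (l : Fin n ⊕ Fin n) :
    X n k c a l (fun y => hfun n k c a s y ^ w) y
      = (w * hfun n k c a s y ^ (w - 1) * (4 * k * c * Sg n a y ^ (k - 1)))
        * (c * (y.1 l - a l) * Sg n a y ^ k
            + ee l * (y.1 (sw l) - a (sw l)) * (y.2 - s)) := by
  have hSS : Sg n a y ^ (2 * k - 1) = Sg n a y ^ (k - 1) * Sg n a y ^ k := by
    rw [← Real.rpow_add hS]; ring_nf
  rw [X_eq]
  unfold pdx pdt
  rw [fderiv_f a s w hc hS]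
  show DF n k c a s w y (el n l) + _ * DF n k c a s w y (et n) = _
  simp only [DF, ContinuousLinearMap.smul_apply, DH_el, DH_et, smul_eq_mul]
  rw [hSS]; ring

end SAux
namespace SAux

variable {n : ℕ}

lemma sumA (a : Fin n ⊕ Fin n → ℝ) (y : Pt n) (c P t : ℝ) :
    ∑ l : Fin n ⊕ Fin n,
        (c * (y.1 l - a l) * P + ee l * (y.1 (sw l) - a (sw l)) * t) ^ 2
      = (c ^ 2 * P ^ 2 + t ^ 2) * Sg n a y := by
  rw [Sg, Fintype.sum_sum_type, Fintype.sum_sum_type]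
  simp only [ee, sw, Sum.elim_inl, Sum.elim_inr]
  rw [← Finset.sum_add_distrib, mul_add, Finset.mul_sum, Finset.mul_sum,
    ← Finset.sum_add_distrib]
  exact Finset.sum_congr rfl fun i _ => by ring

lemma sumsq {k c w : ℝ} (a : Fin n ⊕ Fin n → ℝ) (s : ℝ) {y : Pt n}
    (hc : c ≠ 0) (hS : 0 < Sg n a y) :
    ∑ l : Fin n ⊕ Fin n, (X n k c a l (fun y => hfun n k c a s y ^ w) y) ^ 2
      = (w ^ 2 * (4 * k * c) ^ 2) * hfun n k c a s y ^ (2 * (w - 1) + 1)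
          * Sg n a y ^ (2 * (k - 1) + 1) := by
  have hh := hfun_pos (k := k) (s := s) hc hS
  have e1 : ∀ l : Fin n ⊕ Fin n, (X n k c a l (fun y => hfun n k c a s y ^ w) y) ^ 2
      = (w * hfun n k c a s y ^ (w - 1) * (4 * k * c * Sg n a y ^ (k - 1))) ^ 2
        * (c * (y.1 l - a l) * Sg n a y ^ k
            + ee l * (y.1 (sw l) - a (sw l)) * (y.2 - s)) ^ 2 := by
    intro l; rw [Xf a s w hc hS l]; ring
  rw [Finset.sum_congr rfl fun l _ => e1 l, ← Finset.mul_sum, sumA]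
  have q1 : (Sg n a y ^ k) ^ (2 : ℕ) = Sg n a y ^ (2 * k) := by
    rw [← Real.rpow_natCast (Sg n a y ^ k) 2, ← Real.rpow_mul hS.le]
    norm_num [mul_comm]
  have hA : c ^ 2 * (Sg n a y ^ k) ^ 2 + (y.2 - s) ^ 2 = hfun n k c a s y := by
    rw [hfun, q1]
  rw [hA]
  have q2 : (hfun n k c a s y ^ (w - 1)) ^ (2 : ℕ) * hfun n k c a s y
      = hfun n k c a s y ^ (2 * (w - 1) + 1) := by
    rw [Real.rpow_add_one hh.ne', ← Real.rpow_natCast (hfun n k c a s y ^ (w - 1)) 2,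
      ← Real.rpow_mul hh.le]
    norm_num [mul_comm]
  have q3 : (Sg n a y ^ (k - 1)) ^ (2 : ℕ) * Sg n a y
      = Sg n a y ^ (2 * (k - 1) + 1) := by
    rw [Real.rpow_add_one hS.ne', ← Real.rpow_natCast (Sg n a y ^ (k - 1)) 2,
      ← Real.rpow_mul hS.le]
    norm_num [mul_comm]
  calc (w * hfun n k c a s y ^ (w - 1) * (4 * k * c * Sg n a y ^ (k - 1))) ^ 2
        * (hfun n k c a s y * Sg n a y)
      = (w ^ 2 * (4 * k * c) ^ 2)
          * ((hfun n k c a s y ^ (w - 1)) ^ (2:ℕ) * hfun n k c a s y)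
          * ((Sg n a y ^ (k - 1)) ^ (2:ℕ) * Sg n a y) := by ring
    _ = _ := by rw [q2, q3]

lemma hnorm_pow {k c w p : ℝ} (a : Fin n ⊕ Fin n → ℝ) (s : ℝ) {y : Pt n}
    (hc : c ≠ 0) (hS : 0 < Sg n a y) :
    hnorm n k c a (fun y => hfun n k c a s y ^ w) y ^ (p - 2)
      = (w ^ 2 * (4 * k * c) ^ 2) ^ ((p - 2) / 2)
          * hfun n k c a s y ^ ((2 * (w - 1) + 1) * ((p - 2) / 2))
          * Sg n a y ^ ((2 * (k - 1) + 1) * ((p - 2) / 2)) := by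
  have hh := hfun_pos (k := k) (s := s) hc hS
  have hN : (0:ℝ) ≤ w ^ 2 * (4 * k * c) ^ 2 := by positivity
  have hB1 : (0:ℝ) ≤ hfun n k c a s y ^ (2 * (w - 1) + 1) := (Real.rpow_pos_of_pos hh _).le
  have hB2 : (0:ℝ) ≤ Sg n a y ^ (2 * (k - 1) + 1) := (Real.rpow_pos_of_pos hS _).le
  have hB : (0:ℝ) ≤ (w ^ 2 * (4 * k * c) ^ 2) * hfun n k c a s y ^ (2 * (w - 1) + 1)
      * Sg n a y ^ (2 * (k - 1) + 1) := by positivity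
  rw [hnorm, sumsq a s hc hS, Real.sqrt_eq_rpow, ← Real.rpow_mul hB,
    show (1/2:ℝ) * (p - 2) = (p - 2) / 2 by ring,
    Real.mul_rpow (mul_nonneg hN hB1) hB2, Real.mul_rpow hN hB1,
    ← Real.rpow_mul hh.le, ← Real.rpow_mul hS.le]

end SAux
namespace SAux
open Topology

variable {n : ℕ}

def KK (k c w p : ℝ) : ℝ := (w ^ 2 * (4 * k * c) ^ 2) ^ ((p - 2) / 2) * (w * (4 * k * c))
def AA (w p : ℝ) : ℝ := (2 * (w - 1) + 1) * ((p - 2) / 2) + (w - 1)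
def BB (k p : ℝ) : ℝ := (2 * (k - 1) + 1) * ((p - 2) / 2) + (k - 1)

def AL (n : ℕ) (k c : ℝ) (a : Fin n ⊕ Fin n → ℝ) (s : ℝ) (l : Fin n ⊕ Fin n) (x : Pt n) : ℝ :=
  c * (x.1 l - a l) * Sg n a x ^ k + ee l * (x.1 (sw l) - a (sw l)) * (x.2 - s)

lemma g_eq {k c w p : ℝ} (a : Fin n ⊕ Fin n → ℝ) (s : ℝ) {y : Pt n}
    (hc : c ≠ 0) (hS : 0 < Sg n a y) (l : Fin n ⊕ Fin n) :
    hnorm n k c a (fun y' => hfun n k c a s y' ^ w) y ^ (p - 2)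
        * X n k c a l (fun y' => hfun n k c a s y' ^ w) y
      = KK k c w p * hfun n k c a s y ^ AA w p * Sg n a y ^ BB k p * AL n k c a s l y := by
  have hh := hfun_pos (k := k) (s := s) hc hS
  rw [hnorm_pow a s hc hS, Xf a s w hc hS l, KK, AA, BB, AL,
    Real.rpow_add hh ((2 * (w - 1) + 1) * ((p - 2) / 2)) (w - 1),
    Real.rpow_add hS ((2 * (k - 1) + 1) * ((p - 2) / 2)) (k - 1)]
  ring

lemma continuous_Sg (a : Fin n ⊕ Fin n → ℝ) : Continuous (Sg n a) := by
  unfold Sg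
  exact continuous_finset_sum _ fun l _ =>
    (((continuous_apply l).comp continuous_fst).sub continuous_const).pow 2

def PHI (n : ℕ) (k c w p : ℝ) (a : Fin n ⊕ Fin n → ℝ) (s : ℝ) (l : Fin n ⊕ Fin n)
    (x : Pt n) : ℝ :=
  KK k c w p *
    (4 * k * c * AA w p * hfun n k c a s x ^ (AA w p - 1) * Sg n a x ^ (BB k p - 1)
        * Sg n a x ^ (k - 1) * Sg n a x
        * (c * (x.1 l - a l) * (Sg n a x * Sg n a x ^ (k - 1))
            + ee l * (x.1 (sw l) - a (sw l)) * (x.2 - s)) ^ 2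
      + 2 * BB k p * hfun n k c a s x ^ (AA w p - 1) * Sg n a x ^ (BB k p - 1)
        * hfun n k c a s x * (x.1 l - a l)
        * (c * (x.1 l - a l) * (Sg n a x * Sg n a x ^ (k - 1))
            + ee l * (x.1 (sw l) - a (sw l)) * (x.2 - s))
      + hfun n k c a s x ^ (AA w p - 1) * Sg n a x ^ (BB k p - 1) * Sg n a x ^ (k - 1)
        * hfun n k c a s x * Sg n a x
        * (c * (Sg n a x + 2 * k * ((x.1 l - a l) ^ 2 + (x.1 (sw l) - a (sw l)) ^ 2))))

lemma Xg_eval (k c w p : ℝ) (a : Fin n ⊕ Fin n → ℝ) (s : ℝ) {x : Pt n}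
    (hc : c ≠ 0) (hS : 0 < Sg n a x) (l : Fin n ⊕ Fin n) :
    X n k c a l (fun y => hnorm n k c a (fun y' => hfun n k c a s y' ^ w) y ^ (p - 2)
        * X n k c a l (fun y' => hfun n k c a s y' ^ w) y) x
      = PHI n k c w p a s l x := by
  have hh := hfun_pos (k := k) (s := s) hc hS
  have hsw : sw l ≠ l := by cases l <;> simp [sw]
  -- eventual equality with the explicit local formula
  have hU : ∀ᶠ y in 𝓝 x, 0 < Sg n a y :=
    (continuous_Sg a).continuousAt.eventually (eventually_gt_nhds hS)
  have heq : (fun y => hnorm n k c a (fun y' => hfun n k c a s y' ^ w) y ^ (p - 2)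
        * X n k c a l (fun y' => hfun n k c a s y' ^ w) y)
      =ᶠ[𝓝 x] (fun y => KK k c w p * hfun n k c a s y ^ AA w p * Sg n a y ^ BB k p
        * AL n k c a s l y) :=
    hU.mono fun y hy => g_eq a s hc hy l
  -- derivative of the explicit formula
  have hz1 : HasFDerivAt (fun y : Pt n => y.1 l - a l) (D1 n l) x :=
    (D1 n l).hasFDerivAt.sub_const _
  have hz2 : HasFDerivAt (fun y : Pt n => y.1 (sw l) - a (sw l)) (D1 n (sw l)) x :=
    (D1 n (sw l)).hasFDerivAt.sub_const _
  have ht : HasFDerivAt (fun y : Pt n => y.2 - s) (Dt n) x :=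
    (Dt n).hasFDerivAt.sub_const _
  have hSk := (hasFDerivAt_Sg a x).rpow_const (p := k) (Or.inl hS.ne')
  have hAL := ((hz1.const_mul c).mul hSk).add ((hz2.const_mul (ee l)).mul ht)
  have hhA := (hasFDerivAt_hfun a s hS).rpow_const (p := AA w p) (Or.inl hh.ne')
  have hSB := (hasFDerivAt_Sg a x).rpow_const (p := BB k p) (Or.inl hS.ne')
  have hphi := ((hhA.const_mul (KK k c w p)).mul hSB).mul hAL
  have hfd := heq.fderiv_eq.trans hphi.fderiv
  rw [X_eq]
  simp only [pdx, pdt]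
  rw [hfd]
  simp only [ContinuousLinearMap.add_apply, ContinuousLinearMap.smul_apply, smul_eq_mul,
    DS_el, DS_et, DH_el, DH_et, D1_el, D1_et, Dt_el, Dt_et, hsw, if_neg, if_pos,
    eq_self_iff_true, if_true, if_false, mul_zero, zero_mul, add_zero, zero_add, mul_one,
    Pi.mul_apply, Pi.add_apply]
  have hA1 : hfun n k c a s x ^ AA w p = hfun n k c a s x ^ (AA w p - 1) * hfun n k c a s x := by
    rw [← Real.rpow_add_one hh.ne' (AA w p - 1)]; ring_nf
  have hB1 : Sg n a x ^ BB k p = Sg n a x ^ (BB k p - 1) * Sg n a x := by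
    rw [← Real.rpow_add_one hS.ne' (BB k p - 1)]; ring_nf
  have hK1 : Sg n a x ^ k = Sg n a x * Sg n a x ^ (k - 1) := by
    rw [mul_comm, ← Real.rpow_add_one hS.ne' (k - 1)]; ring_nf
  have h2K : Sg n a x ^ (2 * k - 1)
      = Sg n a x ^ (k - 1) * (Sg n a x ^ (k - 1) * Sg n a x) := by
    rw [← Real.rpow_add_one hS.ne' (k - 1), ← Real.rpow_add hS]; ring_nf
  rw [PHI, hA1, hB1, hK1, h2K]
  rcases l with i | i <;>
    simp only [ee, sw, Sum.elim_inl, Sum.elim_inr] <;> ring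

end SAux
theorem stmt2 (n : ℕ) (hn : 1 ≤ n) (a : Fin n ⊕ Fin n → ℝ) (s : ℝ)
    (c k : ℝ) (hc : c ≠ 0) (hk : 0 < k)
    (p Q w : ℝ) (hp : 1 < p) (hQ : Q = 2 * n + 2 * k) (hpQ : p ≠ Q)
    (hw : w = (Q - p) / ((1 - p) * (4 * k)))
    (x : Pt n) (hx0 : x ≠ (a, s)) (hx : Sg n a x ≠ 0) :
    pLap n k c a p (fun y => hfun n k c a s y ^ w) x = 0 := by
  have hS : 0 < Sg n a x := SAux.Sg_pos hx
  have hh := SAux.hfun_pos (k := k) (s := s) hc hS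
  have hp1 : (1 : ℝ) - p ≠ 0 := ne_of_lt (by linarith)
  have hk0 : k ≠ 0 := hk.ne'
  have hzero : 4 * k * SAux.AA w p + 2 * SAux.BB k p + 2 * (n : ℝ) + 4 * k = 0 := by
    subst hw hQ
    rw [SAux.AA, SAux.BB]
    field_simp
    ring
  have hK1 : Sg n a x ^ k = Sg n a x * Sg n a x ^ (k - 1) := by
    rw [mul_comm, ← Real.rpow_add_one hS.ne' (k - 1)]; ring_nf
  have hu : hfun n k c a s x
      = c ^ 2 * (Sg n a x * Sg n a x ^ (k - 1)) ^ 2 + (x.2 - s) ^ 2 := by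
    rw [hfun, ← hK1, ← Real.rpow_natCast (Sg n a x ^ k) 2, ← Real.rpow_mul hS.le]
    norm_num [mul_comm]
  have hq : ∑ i : Fin n, ((x.1 (Sum.inl i) - a (Sum.inl i)) ^ 2
      + (x.1 (Sum.inr i) - a (Sum.inr i)) ^ 2) = Sg n a x := by
    rw [Sg, Fintype.sum_sum_type, Finset.sum_add_distrib]
  set C : ℝ := SAux.KK k c w p * c * hfun n k c a s x ^ (SAux.AA w p - 1)
      * Sg n a x ^ (SAux.BB k p - 1) * Sg n a x ^ (k - 1) * hfun n k c a s x
      * Sg n a x with hC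
  have pair : ∀ i : Fin n,
      SAux.PHI n k c w p a s (Sum.inl i) x + SAux.PHI n k c w p a s (Sum.inr i) x
        = C * ((4 * k * SAux.AA w p + 2 * SAux.BB k p + 4 * k)
            * ((x.1 (Sum.inl i) - a (Sum.inl i)) ^ 2
              + (x.1 (Sum.inr i) - a (Sum.inr i)) ^ 2) + 2 * Sg n a x) := by
    intro i
    simp only [SAux.PHI, SAux.ee, SAux.sw, Sum.elim_inl, Sum.elim_inr, hC]
    rw [hu]
    ring
  rw [pLap, Finset.sum_congr rfl fun l _ => SAux.Xg_eval k c w p a s hc hS l,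
    Fintype.sum_sum_type, ← Finset.sum_add_distrib]
  calc (∑ i : Fin n, (SAux.PHI n k c w p a s (Sum.inl i) x
          + SAux.PHI n k c w p a s (Sum.inr i) x))
      = ∑ i : Fin n, (C * (4 * k * SAux.AA w p + 2 * SAux.BB k p + 4 * k)
          * ((x.1 (Sum.inl i) - a (Sum.inl i)) ^ 2
            + (x.1 (Sum.inr i) - a (Sum.inr i)) ^ 2) + C * (2 * Sg n a x)) := by
        refine Finset.sum_congr rfl fun i _ => ?_
        rw [pair i]; ring
    _ = C * (4 * k * SAux.AA w p + 2 * SAux.BB k p + 4 * k) * Sg n a x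
          + (n : ℝ) * (C * (2 * Sg n a x)) := by
        rw [Finset.sum_add_distrib, ← Finset.mul_sum, hq, Finset.sum_const,
          Finset.card_univ, Fintype.card_fin, nsmul_eq_mul]
    _ = 0 := by linear_combination (C * Sg n a x) * hzero
end
end

section
/- Let p = Q. At every point of ℝ^{2n+1} ∖ {x₀} where Σ ≠ 0, the function log ψ satisfies the Q-Laplace equation Δ_Q(log ψ) = Σ_{i=1}^{2n} X_i(‖∇₀(log ψ)‖^{Q−2} X_i(log ψ)) = 0. -/
open MeasureTheory Real Filter

noncomputable section

namespace S3

variable {n : ℕ}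

def dco (l : Fin n ⊕ Fin n) : Pt n →L[ℝ] ℝ :=
  (ContinuousLinearMap.proj l).comp (ContinuousLinearMap.fst ℝ ((Fin n ⊕ Fin n) → ℝ) ℝ)

def dT : Pt n →L[ℝ] ℝ := ContinuousLinearMap.snd ℝ ((Fin n ⊕ Fin n) → ℝ) ℝ

@[simp] lemma dco_apply (l : Fin n ⊕ Fin n) (v : Pt n) : dco l v = v.1 l := rfl
@[simp] lemma dT_apply (v : Pt n) : dT (n := n) v = v.2 := rfl

lemma hasFDerivAt_co (a : Fin n ⊕ Fin n → ℝ) (l : Fin n ⊕ Fin n) (y : Pt n) :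
    HasFDerivAt (fun z : Pt n => z.1 l - a l) (dco l) y :=
  ((dco (n := n) l).hasFDerivAt (x := y)).sub_const _

lemma hasFDerivAt_T (s : ℝ) (y : Pt n) :
    HasFDerivAt (fun z : Pt n => z.2 - s) (dT (n := n)) y :=
  ((dT (n := n)).hasFDerivAt (x := y)).sub_const _

def dSg (a : Fin n ⊕ Fin n → ℝ) (y : Pt n) : Pt n →L[ℝ] ℝ :=
  ∑ l : Fin n ⊕ Fin n, (2 * (y.1 l - a l)) • dco l

lemma hasFDerivAt_Sg (a : Fin n ⊕ Fin n → ℝ) (y : Pt n) :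
    HasFDerivAt (Sg n a) (dSg a y) y := by
  have h : ∀ l ∈ Finset.univ, HasFDerivAt (fun z : Pt n => (z.1 l - a l) ^ 2)
      ((2 * (y.1 l - a l)) • dco l) y := by
    intro l _
    have h2 := (hasFDerivAt_co a l y).fun_mul (hasFDerivAt_co a l y)
    simpa [pow_two, two_mul, add_smul] using h2
  exact HasFDerivAt.fun_sum h

@[simp] lemma dSg_e1 (a : Fin n ⊕ Fin n → ℝ) (y : Pt n) (m : Fin n ⊕ Fin n) :
    dSg a y (Pi.single m 1, 0) = 2 * (y.1 m - a m) := by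
  cases m <;>
    simp [dSg, Pi.single_apply, ContinuousLinearMap.sum_apply, Finset.sum_ite_eq']

@[simp] lemma dSg_e2 (a : Fin n ⊕ Fin n → ℝ) (y : Pt n) :
    dSg a y (0, 1) = 0 := by
  simp [dSg, ContinuousLinearMap.sum_apply]

lemma Sg_nonneg (a : Fin n ⊕ Fin n → ℝ) (y : Pt n) : 0 ≤ Sg n a y :=
  Finset.sum_nonneg fun _ _ => sq_nonneg _

lemma Sg_cont (a : Fin n ⊕ Fin n → ℝ) : Continuous (Sg n a) := by
  unfold Sg
  fun_prop

def dH (a : Fin n ⊕ Fin n → ℝ) (s c k : ℝ) (y : Pt n) : Pt n →L[ℝ] ℝ :=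
  (c ^ 2 * (2 * k * Sg n a y ^ (2 * k - 1))) • dSg a y + (2 * (y.2 - s)) • dT

lemma hasFDerivAt_h (a : Fin n ⊕ Fin n → ℝ) (s c k : ℝ) (y : Pt n) (hσ : Sg n a y ≠ 0) :
    HasFDerivAt (hfun n k c a s) (dH a s c k y) y := by
  have h1 := ((hasFDerivAt_Sg a y).rpow_const (p := 2 * k) (Or.inl hσ)).const_mul (c ^ 2)
  have h2 := (hasFDerivAt_T s y).fun_mul (hasFDerivAt_T s y)
  have h3 := h1.fun_add h2
  convert! h3 using 1
  · funext z; simp [hfun, pow_two]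
  · simp only [dH, smul_smul]
    module

@[simp] lemma dH_e1 (a : Fin n ⊕ Fin n → ℝ) (s c k : ℝ) (y : Pt n) (m : Fin n ⊕ Fin n) :
    dH a s c k y (Pi.single m 1, 0)
      = c ^ 2 * (2 * k * Sg n a y ^ (2 * k - 1)) * (2 * (y.1 m - a m)) := by
  simp [dH]

@[simp] lemma dH_e2 (a : Fin n ⊕ Fin n → ℝ) (s c k : ℝ) (y : Pt n) :
    dH a s c k y (0, 1) = 2 * (y.2 - s) := by
  simp [dH]

def dU (a : Fin n ⊕ Fin n → ℝ) (s c k : ℝ) (y : Pt n) : Pt n →L[ℝ] ℝ :=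
  (1 / (4 * k) * (hfun n k c a s y)⁻¹) • dH a s c k y

lemma hasFDerivAt_U (a : Fin n ⊕ Fin n → ℝ) (s c k : ℝ) (y : Pt n)
    (hσ : Sg n a y ≠ 0) (hh : hfun n k c a s y ≠ 0) :
    HasFDerivAt (fun z => 1 / (4 * k) * Real.log (hfun n k c a s z)) (dU a s c k y) y := by
  have h1 := ((hasFDerivAt_h a s c k y hσ).log hh).const_mul (1 / (4 * k))
  convert! h1 using 1
  simp only [dU, smul_smul]

/-- `P_l`. -/
def Pl (a : Fin n ⊕ Fin n → ℝ) (s c k : ℝ) (l : Fin n ⊕ Fin n) (y : Pt n) : ℝ :=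
  match l with
  | Sum.inl i => c * (y.1 (Sum.inl i) - a (Sum.inl i)) * Sg n a y ^ k
      + (y.1 (Sum.inr i) - a (Sum.inr i)) * (y.2 - s)
  | Sum.inr i => c * (y.1 (Sum.inr i) - a (Sum.inr i)) * Sg n a y ^ k
      - (y.1 (Sum.inl i) - a (Sum.inl i)) * (y.2 - s)

lemma Xlog (a : Fin n ⊕ Fin n → ℝ) (s c k : ℝ) (hk : k ≠ 0) (y : Pt n)
    (hσ : 0 < Sg n a y) (hh : hfun n k c a s y ≠ 0) (l : Fin n ⊕ Fin n) :
    X n k c a l (fun z => 1 / (4 * k) * Real.log (hfun n k c a s z)) y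
      = c * Sg n a y ^ (k - 1) * Pl a s c k l y / hfun n k c a s y := by
  have hU := (hasFDerivAt_U a s c k y (ne_of_gt hσ) hh).fderiv
  have hsplit : Sg n a y ^ (2 * k - 1) = Sg n a y ^ (k - 1) * Sg n a y ^ k := by
    rw [← Real.rpow_add hσ]; congr 1; ring
  cases l with
  | inl i =>
    simp only [X, pdx, pdt, hU, dU, ContinuousLinearMap.smul_apply, smul_eq_mul,
      dH_e1, dH_e2, Pl, hsplit]
    field_simp
    ring
  | inr i =>
    simp only [X, pdx, pdt, hU, dU, ContinuousLinearMap.smul_apply, smul_eq_mul,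
      dH_e1, dH_e2, Pl, hsplit]
    field_simp
    ring

end S3
namespace S3
variable {n : ℕ}

lemma Sg_split (a : Fin n ⊕ Fin n → ℝ) (y : Pt n) :
    Sg n a y = ∑ i : Fin n, ((y.1 (Sum.inl i) - a (Sum.inl i)) ^ 2
      + (y.1 (Sum.inr i) - a (Sum.inr i)) ^ 2) := by
  rw [Sg, Fintype.sum_sum_type, ← Finset.sum_add_distrib]

lemma sum_Pl_sq (a : Fin n ⊕ Fin n → ℝ) (s c k : ℝ) (y : Pt n) (hσ : 0 < Sg n a y) :
    ∑ l : Fin n ⊕ Fin n, Pl a s c k l y ^ 2 = hfun n k c a s y * Sg n a y := by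
  have hσ2 : Sg n a y ^ (2 * k) = (Sg n a y ^ k) ^ 2 := by
    rw [← Real.rpow_natCast (Sg n a y ^ k) 2, ← Real.rpow_mul hσ.le]
    norm_num
    congr 1; ring
  have hterm : ∀ i : Fin n, Pl a s c k (Sum.inl i) y ^ 2 + Pl a s c k (Sum.inr i) y ^ 2
      = hfun n k c a s y * ((y.1 (Sum.inl i) - a (Sum.inl i)) ^ 2
        + (y.1 (Sum.inr i) - a (Sum.inr i)) ^ 2) := by
    intro i
    simp only [Pl, hfun, hσ2]
    ring
  rw [Fintype.sum_sum_type, ← Finset.sum_add_distrib]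
  rw [Finset.sum_congr rfl fun i _ => hterm i, ← Finset.mul_sum, ← Sg_split]

lemma hnorm_rpow (a : Fin n ⊕ Fin n → ℝ) (s c k : ℝ) (hk : k ≠ 0) (y : Pt n)
    (hσ : 0 < Sg n a y) (hh : 0 < hfun n k c a s y) (q : ℝ) :
    hnorm n k c a (fun z => 1 / (4 * k) * Real.log (hfun n k c a s z)) y ^ q
      = (c ^ 2 * Sg n a y ^ (2 * k - 1) / hfun n k c a s y) ^ (q / 2) := by
  have hsplit : Sg n a y ^ (2 * k - 1) = Sg n a y ^ (k - 1) * Sg n a y ^ (k - 1) * Sg n a y := by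
    rw [show (2 * k - 1) = (k - 1) + ((k - 1) + 1) by ring, Real.rpow_add hσ,
      Real.rpow_add hσ, Real.rpow_one]
    ring
  have hsum : (∑ l : Fin n ⊕ Fin n,
      (X n k c a l (fun z => 1 / (4 * k) * Real.log (hfun n k c a s z)) y) ^ 2)
      = c ^ 2 * Sg n a y ^ (2 * k - 1) / hfun n k c a s y := by
    rw [Finset.sum_congr rfl fun l _ => by rw [Xlog a s c k hk y hσ hh.ne' l]]
    simp_rw [div_pow, mul_pow, ← Finset.sum_div, ← Finset.mul_sum]
    rw [sum_Pl_sq a s c k y hσ, hsplit]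
    field_simp
  have hBnn : 0 ≤ c ^ 2 * Sg n a y ^ (2 * k - 1) / hfun n k c a s y := by positivity
  rw [hnorm, hsum, Real.sqrt_eq_rpow, ← Real.rpow_mul hBnn]
  congr 1
  ring

lemma hasFDerivAt_inv_comp {f : Pt n → ℝ} {f' : Pt n →L[ℝ] ℝ} {y : Pt n}
    (hf : HasFDerivAt f f' y) (hne : f y ≠ 0) :
    HasFDerivAt (fun z => (f z)⁻¹) (-((f y ^ 2)⁻¹ • f')) y := by
  have := (hasDerivAt_inv hne).comp_hasFDerivAt y hf
  simpa [Function.comp_def] using this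

end S3
set_option maxHeartbeats 1600000 in
theorem stmt3 (n : ℕ) (hn : 1 ≤ n) (a : Fin n ⊕ Fin n → ℝ) (s : ℝ)
    (c k : ℝ) (hc : c ≠ 0) (hk : 0 < k)
    (p Q : ℝ) (hQ : Q = 2 * n + 2 * k) (hp : p = Q)
    (x : Pt n) (hx0 : x ≠ (a, s)) (hx : Sg n a x ≠ 0) :
    pLap n k c a p (fun y => Real.log (psi n k c a s y)) x = 0 := by
  subst hp; subst hQ
  have hk' : k ≠ 0 := ne_of_gt hk
  have hσpos : 0 < Sg n a x := lt_of_le_of_ne (S3.Sg_nonneg a x) (Ne.symm hx)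
  have hσne : Sg n a x ≠ 0 := hx
  have hhpos : ∀ y : Pt n, 0 < Sg n a y → 0 < hfun n k c a s y := by
    intro y hy
    have h1 : 0 < Sg n a y ^ (2 * k) := Real.rpow_pos_of_pos hy _
    have h2 : 0 < c ^ 2 := lt_of_le_of_ne (sq_nonneg c) (Ne.symm (pow_ne_zero 2 hc))
    have h3 : 0 ≤ (y.2 - s) ^ 2 := sq_nonneg _
    have : 0 < c ^ 2 * Sg n a y ^ (2 * k) := mul_pos h2 h1
    unfold hfun; linarith
  have hlog : (fun z => Real.log (psi n k c a s z))
      = fun z => 1 / (4 * k) * Real.log (hfun n k c a s z) := by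
    funext z
    have hz : 0 ≤ hfun n k c a s z :=
      add_nonneg (mul_nonneg (sq_nonneg c)
        (Real.rpow_nonneg (S3.Sg_nonneg a z) _)) (sq_nonneg _)
    rcases eq_or_lt_of_le hz with h0 | h0
    · rw [psi, ← h0, Real.zero_rpow (by positivity), Real.log_zero]
      ring
    · rw [psi, Real.log_rpow h0]
  have hhne : hfun n k c a s x ≠ 0 := (hhpos x hσpos).ne'
  have hmem : {y : Pt n | 0 < Sg n a y} ∈ nhds x :=
    (isOpen_lt continuous_const (S3.Sg_cont a)).mem_nhds hσpos
  simp only [pLap, hlog]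
  rw [Fintype.sum_sum_type, ← Finset.sum_add_distrib]
  set q : ℝ := (2 * (n:ℝ) + 2 * k - 2) / 2 with hq
  set A : ℝ := (2 * k - 1) * q + (k - 1) with hA2
  set M : ℝ := -(q + 1) with hM
  set C : ℝ := c * (c ^ 2) ^ q with hC
  set K1 : ℝ := (k - 1 - q) * (2 * c * C * Sg n a x ^ (k - 1) * Sg n a x ^ (A - 1)
      * hfun n k c a s x ^ (M - 1) * Sg n a x * hfun n k c a s x) with hK1
  set K2 : ℝ := 2 * c * C * Sg n a x ^ (k - 1) * Sg n a x ^ (A - 1)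
      * hfun n k c a s x ^ (M - 1) * Sg n a x ^ 2 * hfun n k c a s x with hK2
  have key : ∀ i : Fin n,
      X n k c a (Sum.inl i) (fun y => hnorm n k c a
          (fun z => 1 / (4 * k) * Real.log (hfun n k c a s z)) y ^ (2 * (n:ℝ) + 2 * k - 2)
          * X n k c a (Sum.inl i) (fun z => 1 / (4 * k) * Real.log (hfun n k c a s z)) y) x
      + X n k c a (Sum.inr i) (fun y => hnorm n k c a
          (fun z => 1 / (4 * k) * Real.log (hfun n k c a s z)) y ^ (2 * (n:ℝ) + 2 * k - 2)
          * X n k c a (Sum.inr i) (fun z => 1 / (4 * k) * Real.log (hfun n k c a s z)) y) x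
      = K1 * ((x.1 (Sum.inl i) - a (Sum.inl i)) ^ 2 + (x.1 (Sum.inr i) - a (Sum.inr i)) ^ 2)
        + K2 := by
    intro i
    have hS := S3.hasFDerivAt_Sg a x
    have hHd := S3.hasFDerivAt_h a s c k x hσne
    have hSA := hS.rpow_const (p := A) (Or.inl hσne)
    have hHM := hHd.rpow_const (p := M) (Or.inl hhne)
    have hP1 := (((S3.hasFDerivAt_co a (Sum.inl i) x).const_mul c).fun_mul
        (hS.rpow_const (p := k) (Or.inl hσne))).fun_add
        ((S3.hasFDerivAt_co a (Sum.inr i) x).fun_mul (S3.hasFDerivAt_T s x))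
    have hP2 := (((S3.hasFDerivAt_co a (Sum.inr i) x).const_mul c).fun_mul
        (hS.rpow_const (p := k) (Or.inl hσne))).fun_sub
        ((S3.hasFDerivAt_co a (Sum.inl i) x).fun_mul (S3.hasFDerivAt_T s x))
    have hE1 := ((hSA.const_mul C).fun_mul hP1).fun_mul hHM
    have hE2 := ((hSA.const_mul C).fun_mul hP2).fun_mul hHM
    have hptwise : ∀ y : Pt n, 0 < Sg n a y → ∀ P : ℝ,
        (c ^ 2 * Sg n a y ^ (2 * k - 1) / hfun n k c a s y) ^ ((2 * (n:ℝ) + 2 * k - 2) / 2)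
          * (c * Sg n a y ^ (k - 1) * P / hfun n k c a s y)
        = C * Sg n a y ^ A * P * hfun n k c a s y ^ M := by
      intro y hy P
      have hhy := hhpos y hy
      have hσnn : (0:ℝ) ≤ Sg n a y := hy.le
      rw [← hq, hC, hA2, hM]
      rw [Real.div_rpow (mul_nonneg (sq_nonneg c) (Real.rpow_nonneg hσnn _)) hhy.le,
        Real.mul_rpow (sq_nonneg c) (Real.rpow_nonneg hσnn _),
        ← Real.rpow_mul hσnn, Real.rpow_add hy ((2 * k - 1) * q) (k - 1),
        Real.rpow_neg hhy.le, Real.rpow_add hhy q 1, Real.rpow_one]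
      field_simp
    have hEq1 : (fun y => hnorm n k c a
          (fun z => 1 / (4 * k) * Real.log (hfun n k c a s z)) y ^ (2 * (n:ℝ) + 2 * k - 2)
          * X n k c a (Sum.inl i) (fun z => 1 / (4 * k) * Real.log (hfun n k c a s z)) y)
        =ᶠ[nhds x]
        (fun y => C * Sg n a y ^ A * (c * (y.1 (Sum.inl i) - a (Sum.inl i)) * Sg n a y ^ k
            + (y.1 (Sum.inr i) - a (Sum.inr i)) * (y.2 - s)) * hfun n k c a s y ^ M) := by
      filter_upwards [hmem] with y hy
      rw [S3.hnorm_rpow a s c k hk' y hy (hhpos y hy),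
        S3.Xlog a s c k hk' y hy (hhpos y hy).ne', hptwise y hy]
      simp only [S3.Pl]
    have hEq2 : (fun y => hnorm n k c a
          (fun z => 1 / (4 * k) * Real.log (hfun n k c a s z)) y ^ (2 * (n:ℝ) + 2 * k - 2)
          * X n k c a (Sum.inr i) (fun z => 1 / (4 * k) * Real.log (hfun n k c a s z)) y)
        =ᶠ[nhds x]
        (fun y => C * Sg n a y ^ A * (c * (y.1 (Sum.inr i) - a (Sum.inr i)) * Sg n a y ^ k
            - (y.1 (Sum.inl i) - a (Sum.inl i)) * (y.2 - s)) * hfun n k c a s y ^ M) := by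
      filter_upwards [hmem] with y hy
      rw [S3.hnorm_rpow a s c k hk' y hy (hhpos y hy),
        S3.Xlog a s c k hk' y hy (hhpos y hy).ne', hptwise y hy]
      simp only [S3.Pl]
    have hfd1 := hEq1.fderiv_eq.trans hE1.fderiv
    have hfd2 := hEq2.fderiv_eq.trans hE2.fderiv
    have hX1 : ∀ g : Pt n → ℝ, X n k c a (Sum.inl i) g x
        = fderiv ℝ g x (Pi.single (Sum.inl i) 1, 0)
          + 2 * k * c * (x.1 (Sum.inr i) - a (Sum.inr i)) * Sg n a x ^ (k - 1)
            * fderiv ℝ g x (0, 1) := fun g => rfl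
    have hX2 : ∀ g : Pt n → ℝ, X n k c a (Sum.inr i) g x
        = fderiv ℝ g x (Pi.single (Sum.inr i) 1, 0)
          - 2 * k * c * (x.1 (Sum.inl i) - a (Sum.inl i)) * Sg n a x ^ (k - 1)
            * fderiv ℝ g x (0, 1) := fun g => rfl
    rw [hX1, hX2, hfd1, hfd2]
    simp only [ContinuousLinearMap.add_apply, ContinuousLinearMap.smul_apply,
      ContinuousLinearMap.sub_apply, smul_eq_mul, S3.dSg_e1, S3.dSg_e2, S3.dH_e1, S3.dH_e2,
      S3.dco_apply, S3.dT_apply, Pi.single_apply, Prod.fst, Prod.snd,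
      ContinuousLinearMap.neg_apply, Pi.zero_apply, if_true, reduceCtorEq, if_false]
    rw [hK1, hK2]
    set S := Sg n a x with hS'
    set h := hfun n k c a s x with hh'
    set V := x.1 (Sum.inl i) - a (Sum.inl i) with hV
    set W := x.1 (Sum.inr i) - a (Sum.inr i) with hW
    set T := x.2 - s with hT
    have e1 : S ^ (2 * k - 1) = S ^ (k - 1) * S ^ (k - 1) * S := by
      rw [show (2 * k - 1) = (k - 1) + ((k - 1) + 1) by ring, Real.rpow_add hσpos,
        Real.rpow_add hσpos, Real.rpow_one]
      ring
    have e3 : S ^ k = S ^ (k - 1) * S := by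
      have h2 := Real.rpow_add hσpos (k - 1) 1
      rw [Real.rpow_one] at h2
      rw [← h2]
      congr 1
      ring
    have eA : S ^ A = S ^ (A - 1) * S := by
      rw [← Real.rpow_add_one hσne]
      congr 1
      ring
    have eH : h ^ M = h ^ (M - 1) * h := by
      rw [← Real.rpow_add_one hhne]
      congr 1
      ring
    have e5 : h = c ^ 2 * (S ^ (k - 1) * S ^ (k - 1) * S * S) + T ^ 2 := by
      rw [hh', hfun, ← hS', ← hT,
        show (2 * k) = (k - 1) + ((k - 1) + (1 + 1)) by ring, Real.rpow_add hσpos,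
        Real.rpow_add hσpos, Real.rpow_add hσpos, Real.rpow_one]
      ring
    rw [e1, e3, eA, eH, e5]
    ring
  rw [Finset.sum_congr rfl fun i _ => key i, Finset.sum_add_distrib, ← Finset.mul_sum,
    ← S3.Sg_split, Finset.sum_const, Finset.card_univ, Fintype.card_fin, nsmul_eq_mul]
  rw [hK1, hK2, hq]
  ring
end
end

section
/- For every 1 < p < ∞ and every R > 0, the measure 𝒱(B_R) = ∫_{B_R} ‖∇₀ψ‖^p dL_{2n+1} satisfies the global Ahlfors Q-regularity identity 𝒱(B_R) = σ_p R^Q, where Q = 2n + 2k and σ_p = 𝒱(B_1). -/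
open MeasureTheory Real Filter

noncomputable section

-- AUXILIARY SECTION (to be inserted above the theorem)
section StmtAux

open MeasureTheory Real Filter NNReal

lemma Sg_nonneg (n : ℕ) (a : Fin n ⊕ Fin n → ℝ) (x : Pt n) : 0 ≤ Sg n a x :=
  Finset.sum_nonneg fun _ _ => sq_nonneg _

def dil (n : ℕ) (a : Fin n ⊕ Fin n → ℝ) (s k R : ℝ) (x : Pt n) : Pt n :=
  (fun l => a l + R * (x.1 l - a l), s + R ^ (2*k) * (x.2 - s))

lemma Sg_dil (n : ℕ) (a : Fin n ⊕ Fin n → ℝ) (s k R : ℝ) (x : Pt n) :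
    Sg n a (dil n a s k R x) = R^2 * Sg n a x := by
  unfold Sg dil
  rw [Finset.mul_sum]
  exact Finset.sum_congr rfl fun l _ => by ring

lemma hfun_nonneg (n : ℕ) (a : Fin n ⊕ Fin n → ℝ) (s c k : ℝ) (x : Pt n) :
    0 ≤ hfun n k c a s x :=
  add_nonneg (mul_nonneg (sq_nonneg _) (Real.rpow_nonneg (Sg_nonneg n a x) _)) (sq_nonneg _)

lemma hfun_dil (n : ℕ) (a : Fin n ⊕ Fin n → ℝ) (s c k R : ℝ) (hR : 0 < R) (x : Pt n) :
    hfun n k c a s (dil n a s k R x) = R ^ (4*k) * hfun n k c a s x := by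
  have h1 : ((R^2 : ℝ)) ^ (2*k) = R ^ (4*k) := by
    rw [← Real.rpow_natCast R 2, ← Real.rpow_mul hR.le]; norm_num; ring_nf
  have h2 : ((R ^ (2*k) : ℝ)) ^ (2:ℕ) = R ^ (4*k) := by
    rw [← Real.rpow_natCast (R ^ (2*k)) 2, ← Real.rpow_mul hR.le]; norm_num; ring_nf
  unfold hfun
  rw [Sg_dil, Real.mul_rpow (sq_nonneg R) (Sg_nonneg n a x), h1]
  have : (dil n a s k R x).2 - s = R ^ (2*k) * (x.2 - s) := by unfold dil; ring
  rw [this, mul_pow, h2]; ring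

lemma psi_dil (n : ℕ) (a : Fin n ⊕ Fin n → ℝ) (s c k R : ℝ) (hR : 0 < R) (hk : 0 < k)
    (x : Pt n) : psi n k c a s (dil n a s k R x) = R * psi n k c a s x := by
  unfold psi
  rw [hfun_dil n a s c k R hR,
    Real.mul_rpow (Real.rpow_nonneg hR.le _) (hfun_nonneg n a s c k x),
    ← Real.rpow_mul hR.le]
  congr 1
  rw [mul_one_div, div_self (by positivity), Real.rpow_one]

lemma diff_Sg (n : ℕ) (a : Fin n ⊕ Fin n → ℝ) : Differentiable ℝ (Sg n a) := by
  unfold Sg; fun_prop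

lemma cont_Sg (n : ℕ) (a : Fin n ⊕ Fin n → ℝ) : Continuous (Sg n a) := by
  unfold Sg; fun_prop

lemma hfun_pos (n : ℕ) (a : Fin n ⊕ Fin n → ℝ) (s c k : ℝ) (hc : c ≠ 0) {x : Pt n}
    (hx : 0 < Sg n a x) : 0 < hfun n k c a s x :=
  add_pos_of_pos_of_nonneg
    (mul_pos (by positivity) (Real.rpow_pos_of_pos hx _)) (sq_nonneg _)

lemma diff_psi (n : ℕ) (a : Fin n ⊕ Fin n → ℝ) (s c k : ℝ) (hc : c ≠ 0) {x : Pt n}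
    (hx : 0 < Sg n a x) : DifferentiableAt ℝ (psi n k c a s) x := by
  have dh : DifferentiableAt ℝ (hfun n k c a s) x := by
    unfold hfun
    exact (((diff_Sg n a x).rpow_const (Or.inl hx.ne')).const_mul _).add (by fun_prop)
  exact dh.rpow_const (Or.inl (hfun_pos n a s c k hc hx).ne')

lemma cont_psi (n : ℕ) (a : Fin n ⊕ Fin n → ℝ) (s c k : ℝ) (hk : 0 < k) :
    Continuous (psi n k c a s) := by
  have ch : Continuous (hfun n k c a s) := by
    unfold hfun
    exact (continuous_const.mul ((cont_Sg n a).rpow_const fun x => Or.inr (by positivity))).add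
      (by fun_prop)
  exact ch.rpow_const fun x => Or.inr (by positivity)

def dL (n : ℕ) (k R : ℝ) : Pt n →L[ℝ] Pt n :=
  ContinuousLinearMap.prodMap (R • ContinuousLinearMap.id ℝ _)
    ((R ^ (2*k)) • ContinuousLinearMap.id ℝ ℝ)

lemma dil_eq (n : ℕ) (a : Fin n ⊕ Fin n → ℝ) (s k R : ℝ) : dil n a s k R = fun x : Pt n =>
    ((fun l => a l - R * a l, s - R ^ (2*k) * s) : Pt n) + dL n k R x := by
  funext x
  refine Prod.ext ?_ ?_
  · funext l; simp [dil, dL]; ring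
  · simp [dil, dL]; ring

lemma hasFDerivAt_dil (n : ℕ) (a : Fin n ⊕ Fin n → ℝ) (s k R : ℝ) (x : Pt n) :
    HasFDerivAt (dil n a s k R) (dL n k R) x := by
  rw [dil_eq]
  exact ((dL n k R).hasFDerivAt).const_add _

lemma meas_dil (n : ℕ) (a : Fin n ⊕ Fin n → ℝ) (s k R : ℝ) :
    Measurable (dil n a s k R) := by
  rw [dil_eq]
  exact (measurable_const.add (dL n k R).continuous.measurable)

lemma X_dil (n : ℕ) (a : Fin n ⊕ Fin n → ℝ) (s c k R : ℝ)
    (hc : c ≠ 0) (hk : 0 < k) (hR : 0 < R) {x : Pt n} (hx : 0 < Sg n a x)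
    (l : Fin n ⊕ Fin n) :
    X n k c a l (psi n k c a s) (dil n a s k R x) = X n k c a l (psi n k c a s) x := by
  set ψ := psi n k c a s with hψ
  have hx' : 0 < Sg n a (dil n a s k R x) := by
    rw [Sg_dil]; positivity
  have main : (fderiv ℝ ψ (dil n a s k R x)).comp (dL n k R) = R • fderiv ℝ ψ x := by
    have c1 : HasFDerivAt (ψ ∘ dil n a s k R)
        ((fderiv ℝ ψ (dil n a s k R x)).comp (dL n k R)) x :=
      ((diff_psi n a s c k hc hx').hasFDerivAt).comp x (hasFDerivAt_dil n a s k R x)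
    have c2 : HasFDerivAt (fun y => R * ψ y) (R • fderiv ℝ ψ x) x :=
      ((diff_psi n a s c k hc hx).hasFDerivAt).const_mul R
    have he : ψ ∘ dil n a s k R = fun y => R * ψ y :=
      funext fun y => psi_dil n a s c k R hR hk y
    rw [he] at c1
    exact c1.unique c2
  have E1 : ∀ m : Fin n ⊕ Fin n, pdx n m ψ (dil n a s k R x) = pdx n m ψ x := by
    intro m
    have hv : dL n k R ((Pi.single m 1 : (Fin n ⊕ Fin n) → ℝ), (0:ℝ))
        = R • (((Pi.single m 1 : (Fin n ⊕ Fin n) → ℝ), (0:ℝ)) : Pt n) := by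
      simp [dL, Prod.smul_mk]
    have := DFunLike.congr_fun main ((Pi.single m 1 : (Fin n ⊕ Fin n) → ℝ), (0:ℝ))
    simp only [ContinuousLinearMap.comp_apply, ContinuousLinearMap.smul_apply, hv,
      _root_.map_smul, smul_eq_mul] at this
    unfold pdx
    exact mul_left_cancel₀ hR.ne' this
  have E2 : R ^ (2*k) * pdt n ψ (dil n a s k R x) = R * pdt n ψ x := by
    have hv : dL n k R (((0 : (Fin n ⊕ Fin n) → ℝ), (1:ℝ)) : Pt n)
        = (R ^ (2*k)) • ((((0 : (Fin n ⊕ Fin n) → ℝ), (1:ℝ))) : Pt n) := by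
      simp [dL, Prod.smul_mk]
    have := DFunLike.congr_fun main (((0 : (Fin n ⊕ Fin n) → ℝ), (1:ℝ)) : Pt n)
    simp only [ContinuousLinearMap.comp_apply, ContinuousLinearMap.smul_apply, hv,
      _root_.map_smul, smul_eq_mul] at this
    unfold pdt
    exact this
  have h2k : (R : ℝ) ^ (2*k) ≠ 0 := (Real.rpow_pos_of_pos hR _).ne'
  have E2' : pdt n ψ (dil n a s k R x) = R ^ (1 - 2*k) * pdt n ψ x := by
    rw [Real.rpow_sub hR, Real.rpow_one]
    rw [div_mul_eq_mul_div, eq_div_iff h2k]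
    linarith [E2]
  have coord : ∀ m : Fin n ⊕ Fin n, (dil n a s k R x).1 m - a m = R * (x.1 m - a m) := by
    intro m; simp [dil]
  have SgPow : Sg n a (dil n a s k R x) ^ (k-1) = R ^ (2*k-2) * Sg n a x ^ (k-1) := by
    rw [Sg_dil, Real.mul_rpow (sq_nonneg R) (Sg_nonneg n a x)]
    congr 1
    rw [← Real.rpow_natCast R 2, ← Real.rpow_mul hR.le]; norm_num; ring_nf
  have hpow1 : R ^ (2*k - 2) * R ^ (1 - 2*k) * R = 1 := by
    have h1 : R ^ (2*k-2) * R ^ (1-2*k) = R ^ (-1 : ℝ) := by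
      rw [← Real.rpow_add hR]; ring_nf
    rw [h1, Real.rpow_neg_one]
    exact inv_mul_cancel₀ hR.ne'
  cases l with
  | inl i =>
      show pdx n (Sum.inl i) ψ _ + 2*k*c*((dil n a s k R x).1 (Sum.inr i) - a (Sum.inr i)) *
          Sg n a (dil n a s k R x) ^ (k-1) * pdt n ψ (dil n a s k R x) = _
      rw [E1, coord, SgPow, E2']
      show _ = pdx n (Sum.inl i) ψ x + 2*k*c*(x.1 (Sum.inr i) - a (Sum.inr i)) *
          Sg n a x ^ (k-1) * pdt n ψ x
      linear_combination
        (2*k*c*(x.1 (Sum.inr i) - a (Sum.inr i)) * (Sg n a x ^ (k-1)) * pdt n ψ x) * hpow1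
  | inr j =>
      show pdx n (Sum.inr j) ψ _ - 2*k*c*((dil n a s k R x).1 (Sum.inl j) - a (Sum.inl j)) *
          Sg n a (dil n a s k R x) ^ (k-1) * pdt n ψ (dil n a s k R x) = _
      rw [E1, coord, SgPow, E2']
      show _ = pdx n (Sum.inr j) ψ x - 2*k*c*(x.1 (Sum.inl j) - a (Sum.inl j)) *
          Sg n a x ^ (k-1) * pdt n ψ x
      linear_combination
        (-(2*k*c*(x.1 (Sum.inl j) - a (Sum.inl j)) * (Sg n a x ^ (k-1)) * pdt n ψ x)) * hpow1

lemma hnorm_dil (n : ℕ) (a : Fin n ⊕ Fin n → ℝ) (s c k R : ℝ)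
    (hc : c ≠ 0) (hk : 0 < k) (hR : 0 < R) {x : Pt n} (hx : 0 < Sg n a x) :
    hnorm n k c a (psi n k c a s) (dil n a s k R x) = hnorm n k c a (psi n k c a s) x := by
  unfold hnorm
  congr 1
  exact Finset.sum_congr rfl fun l _ => by rw [X_dil n a s c k R hc hk hR hx]

lemma my_smul_prod {α β : Type*} [MeasurableSpace α] [MeasurableSpace β]
    (μ : Measure α) (ν : Measure β) [SigmaFinite μ] [SigmaFinite ν] (r : ℝ≥0) :
    (r • μ).prod ν = r • (μ.prod ν) := by
  refine Measure.prod_eq fun s t hs ht => ?_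
  rw [Measure.smul_apply, Measure.smul_apply, Measure.prod_prod, ENNReal.smul_def,
    ENNReal.smul_def, smul_eq_mul, smul_eq_mul, mul_assoc]

lemma my_prod_smul {α β : Type*} [MeasurableSpace α] [MeasurableSpace β]
    (μ : Measure α) (ν : Measure β) [SigmaFinite μ] [SigmaFinite ν] (r : ℝ≥0) :
    μ.prod (r • ν) = r • (μ.prod ν) := by
  refine Measure.prod_eq fun s t hs ht => ?_
  rw [Measure.smul_apply, Measure.smul_apply, Measure.prod_prod, ENNReal.smul_def,
    ENNReal.smul_def, smul_eq_mul, smul_eq_mul]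
  ring

lemma map_affine {E : Type*} [NormedAddCommGroup E] [NormedSpace ℝ E] [MeasurableSpace E]
    [BorelSpace E] [FiniteDimensional ℝ E] (μ : Measure E) [μ.IsAddHaarMeasure]
    (b : E) {r : ℝ} (hr : r ≠ 0) :
    Measure.map (fun v => b + r • v) μ
      = ((|(r ^ Module.finrank ℝ E)⁻¹|).toNNReal : ℝ≥0) • μ := by
  have h : (fun v : E => b + r • v) = (fun v => b + v) ∘ (fun v => r • v) := rfl
  rw [h, ← Measure.map_map (measurable_const_add b) (measurable_const_smul r),
    Measure.map_addHaar_smul μ hr, Measure.map_smul,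
    MeasureTheory.map_add_left_eq_self]
  rw [ENNReal.smul_def]
  rfl

lemma map_dil (n : ℕ) (a : Fin n ⊕ Fin n → ℝ) (s k R : ℝ) (hR : 0 < R) :
    Measure.map (dil n a s k R) (volume : Measure (Pt n))
      = ENNReal.ofReal ((R ^ (2*(n:ℝ) + 2*k))⁻¹) • volume := by
  have h2k : (0:ℝ) < R ^ (2*k) := Real.rpow_pos_of_pos hR _
  have hδ : dil n a s k R = Prod.map
      (fun v : (Fin n ⊕ Fin n) → ℝ => (fun l => a l - R * a l) + R • v)
      (fun t : ℝ => (s - R ^ (2*k) * s) + R ^ (2*k) • t) := by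
    funext x
    refine Prod.ext ?_ ?_
    · funext l; simp [dil, Prod.map]; ring
    · simp [dil, Prod.map]; ring
  have m1 : Measurable (fun v : (Fin n ⊕ Fin n) → ℝ => (fun l => a l - R * a l) + R • v) :=
    (measurable_const_smul R).const_add _
  have m2 : Measurable (fun t : ℝ => (s - R ^ (2*k) * s) + R ^ (2*k) • t) :=
    (measurable_const_smul (R ^ (2*k))).const_add _
  have key : (volume : Measure (Pt n)) = (volume : Measure ((Fin n ⊕ Fin n) → ℝ)).prod volume :=
    Measure.volume_eq_prod _ _
  rw [key, hδ, ← Measure.map_prod_map _ _ m1 m2,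
    map_affine volume _ hR.ne', map_affine volume _ h2k.ne',
    my_prod_smul, my_smul_prod, smul_smul, ← key]
  have hfr : Module.finrank ℝ ((Fin n ⊕ Fin n) → ℝ) = n + n := by
    simp [Module.finrank_pi]
  have hfr2 : Module.finrank ℝ ℝ = 1 := Module.finrank_self ℝ
  rw [hfr, hfr2, ENNReal.smul_def]
  congr 1
  rw [← Real.toNNReal_mul (by positivity)]
  have habs1 : |(R ^ (n + n) : ℝ)⁻¹| = (R ^ (n+n) : ℝ)⁻¹ := abs_of_pos (by positivity)
  have habs2 : |((R ^ (2*k)) ^ 1 : ℝ)⁻¹| = (R ^ (2*k) : ℝ)⁻¹ := by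
    rw [pow_one]; exact abs_of_pos (by positivity)
  rw [habs1, habs2]
  have h3 : ((R ^ (n + n) : ℝ))⁻¹ * (R ^ (2*k))⁻¹ = (R ^ (2*(n:ℝ) + 2*k))⁻¹ := by
    rw [← mul_inv]
    congr 1
    rw [← Real.rpow_natCast R (n+n), ← Real.rpow_add hR]
    congr 1
    push_cast; ring
  rw [mul_comm, h3]
  rfl

lemma meas_rpow_const (q : ℝ) : Measurable fun x : ℝ => x ^ q :=
  measurable_of_continuousOn_compl_singleton 0 fun x hx =>
    (Real.continuousAt_rpow_const x q (Or.inl hx)).continuousWithinAt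

lemma meas_X (n : ℕ) (a : Fin n ⊕ Fin n → ℝ) (c k : ℝ) (u : Pt n → ℝ) (l : Fin n ⊕ Fin n) :
    Measurable (X n k c a l u) := by
  have hpdx : ∀ m, Measurable (pdx n m u) := by
    intro m; unfold pdx; exact measurable_fderiv_apply_const ℝ u _
  have hpdt : Measurable (pdt n u) := by
    unfold pdt; exact measurable_fderiv_apply_const ℝ u _
  have hSgp : Measurable fun x : Pt n => Sg n a x ^ (k - 1) :=
    (meas_rpow_const (k-1)).comp (cont_Sg n a).measurable
  have hco : ∀ m, Measurable fun x : Pt n => x.1 m - a m := by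
    intro m; fun_prop
  cases l with
  | inl i =>
      exact (hpdx _).add ((((measurable_const.mul (hco (Sum.inr i)))).mul hSgp).mul hpdt)
  | inr j =>
      exact (hpdx _).sub ((((measurable_const.mul (hco (Sum.inl j)))).mul hSgp).mul hpdt)

lemma meas_hnorm_pow (n : ℕ) (a : Fin n ⊕ Fin n → ℝ) (c k p : ℝ) (u : Pt n → ℝ) :
    Measurable (fun x => hnorm n k c a u x ^ p) := by
  have h1 : Measurable (hnorm n k c a u) := by
    unfold hnorm
    exact Real.continuous_sqrt.measurable.comp
      (Finset.measurable_sum _ fun l _ => (meas_X n a c k u l).pow_const 2)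
  exact (meas_rpow_const p).comp h1

lemma Sg_pos_ae (n : ℕ) (hn : 1 ≤ n) (a : Fin n ⊕ Fin n → ℝ) :
    ∀ᵐ x : Pt n ∂volume, 0 < Sg n a x := by
  rw [ae_iff]
  have hsub : {x : Pt n | ¬ 0 < Sg n a x}
      ⊆ ({a} : Set ((Fin n ⊕ Fin n) → ℝ)) ×ˢ (Set.univ : Set ℝ) := by
    intro x hx
    have h0 : Sg n a x = 0 := le_antisymm (not_lt.1 hx) (Sg_nonneg n a x)
    have hz : ∀ l ∈ Finset.univ, ((x.1 l - a l)^2 : ℝ) = 0 :=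
      (Finset.sum_eq_zero_iff_of_nonneg (fun _ _ => sq_nonneg _)).1 h0
    refine ⟨?_, trivial⟩
    have : x.1 = a := by
      funext l
      have := hz l (Finset.mem_univ l)
      have := pow_eq_zero_iff (n := 2) (by norm_num) |>.1 this
      linarith [sub_eq_zero.1 this]
    simp [this]
  refine measure_mono_null hsub ?_
  haveI : Nonempty (Fin n) := ⟨⟨0, hn⟩⟩
  have key : (volume : Measure (Pt n)) = (volume : Measure ((Fin n ⊕ Fin n) → ℝ)).prod volume :=
    Measure.volume_eq_prod _ _
  rw [key, Measure.prod_prod, measure_singleton, zero_mul]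

end StmtAux

theorem stmt5 (n : ℕ) (hn : 1 ≤ n) (a : Fin n ⊕ Fin n → ℝ) (s : ℝ)
    (c k : ℝ) (hc : c ≠ 0) (hk : 0 < k)
    (p Q : ℝ) (hp : 1 < p) (hQ : Q = 2 * n + 2 * k) (R : ℝ) (hR : 0 < R) :
    (∫ x in {x : Pt n | psi n k c a s x < R}, hnorm n k c a (psi n k c a s) x ^ p)
      = (∫ x in {x : Pt n | psi n k c a s x < 1}, hnorm n k c a (psi n k c a s) x ^ p)
          * R ^ Q := by
  subst hQ
  have hQpos : (0:ℝ) < R ^ (2*(n:ℝ) + 2*k) := Real.rpow_pos_of_pos hR _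
  have hcont := cont_psi n a s c k hk
  have mSR : MeasurableSet {x : Pt n | psi n k c a s x < R} :=
    (isOpen_lt hcont continuous_const).measurableSet
  have mS1 : MeasurableSet {x : Pt n | psi n k c a s x < 1} :=
    (isOpen_lt hcont continuous_const).measurableSet
  have mF : Measurable (fun x => hnorm n k c a (psi n k c a s) x ^ p) :=
    meas_hnorm_pow n a c k p _
  rw [← integral_indicator mSR, ← integral_indicator mS1]
  have hvol : (volume : Measure (Pt n))
      = ENNReal.ofReal (R ^ (2*(n:ℝ) + 2*k)) • Measure.map (dil n a s k R) volume := by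
    rw [map_dil n a s k R hR, smul_smul, ← ENNReal.ofReal_mul hQpos.le,
      mul_inv_cancel₀ hQpos.ne', ENNReal.ofReal_one, one_smul]
  calc ∫ x, ({x : Pt n | psi n k c a s x < R}).indicator
        (fun x => hnorm n k c a (psi n k c a s) x ^ p) x
      = ∫ x, ({x : Pt n | psi n k c a s x < R}).indicator
          (fun x => hnorm n k c a (psi n k c a s) x ^ p) x
          ∂(ENNReal.ofReal (R ^ (2*(n:ℝ) + 2*k)) • Measure.map (dil n a s k R) volume) := by
        rw [← hvol]
    _ = (R ^ (2*(n:ℝ) + 2*k)) * ∫ x, ({x : Pt n | psi n k c a s x < R}).indicator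
          (fun x => hnorm n k c a (psi n k c a s) x ^ p) x
          ∂(Measure.map (dil n a s k R) volume) := by
        rw [integral_smul_measure, ENNReal.toReal_ofReal hQpos.le, smul_eq_mul]
    _ = (R ^ (2*(n:ℝ) + 2*k)) * ∫ x, ({x : Pt n | psi n k c a s x < R}).indicator
          (fun x => hnorm n k c a (psi n k c a s) x ^ p) (dil n a s k R x) := by
        rw [integral_map (meas_dil n a s k R).aemeasurable
          (mF.indicator mSR).aestronglyMeasurable]
    _ = (R ^ (2*(n:ℝ) + 2*k)) * ∫ x, ({x : Pt n | psi n k c a s x < 1}).indicator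
          (fun x => hnorm n k c a (psi n k c a s) x ^ p) x := by
        congr 1
        refine integral_congr_ae ?_
        filter_upwards [Sg_pos_ae n hn a] with x hx
        have hmem : dil n a s k R x ∈ {y : Pt n | psi n k c a s y < R}
            ↔ x ∈ {y : Pt n | psi n k c a s y < 1} := by
          simp only [Set.mem_setOf_eq, psi_dil n a s c k R hR hk]
          exact mul_lt_iff_lt_one_right hR
        by_cases hm : x ∈ {y : Pt n | psi n k c a s y < 1}
        · rw [Set.indicator_of_mem (hmem.mpr hm), Set.indicator_of_mem hm,
            hnorm_dil n a s c k R hc hk hR hx]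
        · rw [Set.indicator_of_notMem (fun hcon => hm (hmem.mp hcon)),
            Set.indicator_of_notMem hm]
  ring
end
end
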